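/- arXiv:2507.12271 — 3 statements merged into one kernel-verified Lean document; each statement's English description precedes it below -/
import Mathlib

section
/- Let v ∈ V be a generator and w ∈ W_Γ an element with vw = wv and v ≤_R w. Then for every u ∈ W_Γ one has w ≤_R v·u if and only if (vw ≤_R u and not w ≤_R u); equivalently, left translation by v maps the set {u ∈ W_Γ : w ≤_R u} bijectively onto {u ∈ W_Γ : vw ≤_R u} \ {u ∈ W_Γ : w ≤_R u}. -/
open CoxeterSystem
open scoped Classical

/-- The right-angled Coxeter matrix associated with a simple graph `Γ`:
`M v v = 1`, `M v v' = 2` if `v, v'` are adjacent, and `M v v' = 0` (representing `∞`)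
otherwise. -/
noncomputable def SimpleGraph.racMatrix {V : Type*} (Γ : SimpleGraph V) : CoxeterMatrix V where
  M := Matrix.of fun v w => if v = w then 1 else if Γ.Adj v w then 2 else 0
  isSymm := by
    classical
    ext i j
    by_cases h : i = j
    · simp [Matrix.transpose_apply, h]
    · simp only [Matrix.transpose_apply, Matrix.of_apply, if_neg h, if_neg (Ne.symm h)]
      rw [Γ.adj_comm]
  diagonal i := by simp
  off_diagonal i i' h := by
    simp only [Matrix.of_apply, if_neg h]
    split <;> simp

/-- The right-angled Coxeter group `W_Γ` of a simple graph `Γ`. -/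
abbrev SimpleGraph.racGroup {V : Type*} (Γ : SimpleGraph V) : Type _ := Γ.racMatrix.Group

/-- The canonical Coxeter system on `W_Γ`. -/
noncomputable def SimpleGraph.racCS {V : Type*} (Γ : SimpleGraph V) :
    CoxeterSystem Γ.racMatrix Γ.racGroup := Γ.racMatrix.toCoxeterSystem

/-- The weak right Bruhat order on `W_Γ`: `u ≤_R w` iff `ℓ(w) = ℓ(u) + ℓ(u⁻¹w)`. -/
def SimpleGraph.leR {V : Type*} (Γ : SimpleGraph V) (u w : Γ.racGroup) : Prop :=
  Γ.racCS.length w = Γ.racCS.length u + Γ.racCS.length (u⁻¹ * w)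

/-- A closed walk in the simple graph `G`: a nonempty sequence of vertices in which consecutive
vertices are adjacent and additionally the first and the last vertex are adjacent. -/
def SimpleGraph.IsClosedWalkList {V : Type*} (G : SimpleGraph V) (l : List V) : Prop :=
  l ≠ [] ∧ l.Chain' G.Adj ∧ ∀ h : l ≠ [], G.Adj (l.head h) (l.getLast h)

namespace RacAux

variable {V : Type*} (Γ : SimpleGraph V)

abbrev G := Γ.racGroup


theorem cancel3 (i : V) (t : G Γ) : Γ.racCS.simple i * (Γ.racCS.simple i * t * Γ.racCS.simple i) * Γ.racCS.simple i = t := by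
  have h := Γ.racCS.simple_mul_simple_self i
  calc Γ.racCS.simple i * (Γ.racCS.simple i * t * Γ.racCS.simple i) * Γ.racCS.simple i = (Γ.racCS.simple i * Γ.racCS.simple i) * t * (Γ.racCS.simple i * Γ.racCS.simple i) := by group
  _ = t := by rw [h]; group

theorem conj_eq_iff (i : V) (t : G Γ) : Γ.racCS.simple i * t * Γ.racCS.simple i = Γ.racCS.simple i ↔ t = Γ.racCS.simple i := by
  constructor
  · intro h
    have := congrArg (fun x => Γ.racCS.simple i * x * Γ.racCS.simple i) h
    rw [cancel3] at this
    rw [this]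
    have h2 := Γ.racCS.simple_mul_simple_self i
    calc Γ.racCS.simple i * Γ.racCS.simple i * Γ.racCS.simple i = (Γ.racCS.simple i * Γ.racCS.simple i) * Γ.racCS.simple i := by group
    _ = Γ.racCS.simple i := by rw [h2]; group
  · rintro rfl
    have h2 := Γ.racCS.simple_mul_simple_self i
    calc Γ.racCS.simple i * Γ.racCS.simple i * Γ.racCS.simple i = (Γ.racCS.simple i * Γ.racCS.simple i) * Γ.racCS.simple i := by group
    _ = Γ.racCS.simple i := by rw [h2]; group

noncomputable def act (i : V) : Equiv.Perm (G Γ × Bool) :=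
  Function.Involutive.toPerm
    (fun p => (Γ.racCS.simple i * p.1 * Γ.racCS.simple i, if p.1 = Γ.racCS.simple i then !p.2 else p.2))
    (by
      rintro ⟨t, ε⟩
      simp only
      rw [cancel3]
      by_cases h : t = Γ.racCS.simple i
      · rw [if_pos ((conj_eq_iff Γ i t).mpr h), if_pos h, Bool.not_not]
      · rw [if_neg (fun hh => h ((conj_eq_iff Γ i t).mp hh)), if_neg h])

theorem act_apply (i : V) (t : G Γ) (ε : Bool) :
    act Γ i (t, ε) = (Γ.racCS.simple i * t * Γ.racCS.simple i, if t = Γ.racCS.simple i then !ε else ε) := rfl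

theorem act_invol (i : V) : act Γ i * act Γ i = 1 := by
  ext p
  · rcases p with ⟨t, ε⟩
    show ((act Γ i) ((act Γ i) (t, ε))).1 = t
    rw [act_apply, act_apply]
    simp only
    rw [cancel3]
  · rcases p with ⟨t, ε⟩
    show ((act Γ i) ((act Γ i) (t, ε))).2 = ε
    rw [act_apply, act_apply]
    simp only
    by_cases h : t = Γ.racCS.simple i
    · rw [if_pos h, if_pos ((conj_eq_iff Γ i t).mpr h), Bool.not_not]
    · rw [if_neg h, if_neg (fun hh => h ((conj_eq_iff Γ i t).mp hh))]

theorem simple_comm {i j : V} (hij : Γ.Adj i j) :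
    Γ.racCS.simple i * Γ.racCS.simple j = Γ.racCS.simple j * Γ.racCS.simple i := by
  have h2 : Γ.racMatrix i j = 2 := by
    show (if i = j then 1 else if Γ.Adj i j then 2 else 0) = 2
    rw [if_neg hij.ne, if_pos hij]
  have := Γ.racCS.simple_mul_simple_pow i j
  rw [h2, pow_two] at this
  calc Γ.racCS.simple i * Γ.racCS.simple j
      = (Γ.racCS.simple i * Γ.racCS.simple j)⁻¹ := by
        exact (inv_eq_of_mul_eq_one_right this).symm
    _ = Γ.racCS.simple j * Γ.racCS.simple i := by
        rw [mul_inv_rev, Γ.racCS.inv_simple, Γ.racCS.inv_simple]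

theorem conj_eq_iff' {i j : V} (hij : Γ.Adj i j) (t : G Γ) :
    Γ.racCS.simple j * t * Γ.racCS.simple j = Γ.racCS.simple i ↔ t = Γ.racCS.simple i := by
  have hc := simple_comm Γ hij
  have h2 := Γ.racCS.simple_mul_simple_self j
  constructor
  · intro h
    have : t = Γ.racCS.simple j * Γ.racCS.simple i * Γ.racCS.simple j := by
      have := congrArg (fun x => Γ.racCS.simple j * x * Γ.racCS.simple j) h
      rw [cancel3] at this
      exact this
    rw [this, show Γ.racCS.simple j * Γ.racCS.simple i * Γ.racCS.simple j
        = (Γ.racCS.simple j * Γ.racCS.simple i) * Γ.racCS.simple j from by group,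
      ← hc, show Γ.racCS.simple i * Γ.racCS.simple j * Γ.racCS.simple j
        = Γ.racCS.simple i * (Γ.racCS.simple j * Γ.racCS.simple j) from by group, h2, mul_one]
  · rintro rfl
    rw [show Γ.racCS.simple j * Γ.racCS.simple i * Γ.racCS.simple j
        = Γ.racCS.simple j * (Γ.racCS.simple i * Γ.racCS.simple j) from by group, hc]
    rw [show Γ.racCS.simple j * (Γ.racCS.simple j * Γ.racCS.simple i)
        = (Γ.racCS.simple j * Γ.racCS.simple j) * Γ.racCS.simple i from by group, h2, one_mul]

theorem act_comm {i j : V} (hij : Γ.Adj i j) :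
    act Γ i * act Γ j = act Γ j * act Γ i := by
  have hc := simple_comm Γ hij
  ext p
  · rcases p with ⟨t, ε⟩
    show ((act Γ i) ((act Γ j) (t, ε))).1 = ((act Γ j) ((act Γ i) (t, ε))).1
    rw [act_apply, act_apply, act_apply, act_apply]
    simp only
    calc Γ.racCS.simple i * (Γ.racCS.simple j * t * Γ.racCS.simple j) * Γ.racCS.simple i
        = (Γ.racCS.simple i * Γ.racCS.simple j) * t
            * (Γ.racCS.simple j * Γ.racCS.simple i) := by group
      _ = (Γ.racCS.simple j * Γ.racCS.simple i) * t
            * (Γ.racCS.simple i * Γ.racCS.simple j) := by rw [hc, ← hc]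
      _ = Γ.racCS.simple j * (Γ.racCS.simple i * t * Γ.racCS.simple i) * Γ.racCS.simple j := by
            group
  · rcases p with ⟨t, ε⟩
    show ((act Γ i) ((act Γ j) (t, ε))).2 = ((act Γ j) ((act Γ i) (t, ε))).2
    rw [act_apply, act_apply, act_apply, act_apply]
    simp only
    rw [if_congr (conj_eq_iff' Γ hij t) rfl rfl,
      if_congr (conj_eq_iff' Γ hij.symm t) rfl rfl]
    by_cases h1 : t = Γ.racCS.simple i <;> by_cases h2 : t = Γ.racCS.simple j <;>
      by_cases hss : Γ.racCS.simple i = Γ.racCS.simple j <;>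
      first
        | (simp [h1, h2, hss]; done)
        | (simp [h1, h2, hss, Ne.symm hss]; done)

theorem liftable : Γ.racMatrix.IsLiftable (act Γ) := by
  intro i j
  rcases eq_or_ne i j with rfl | hne
  · have h1 : Γ.racMatrix i i = 1 := by
      show (if i = i then 1 else if Γ.Adj i i then 2 else 0) = 1
      rw [if_pos rfl]
    rw [h1, pow_one, act_invol]
  · by_cases hadj : Γ.Adj i j
    · have h2 : Γ.racMatrix i j = 2 := by
        show (if i = j then 1 else if Γ.Adj i j then 2 else 0) = 2
        rw [if_neg hne, if_pos hadj]
      rw [h2, pow_two]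
      calc act Γ i * act Γ j * (act Γ i * act Γ j)
          = act Γ i * (act Γ j * act Γ i) * act Γ j := by group
        _ = act Γ i * (act Γ i * act Γ j) * act Γ j := by rw [act_comm Γ hadj]
        _ = (act Γ i * act Γ i) * (act Γ j * act Γ j) := by group
        _ = 1 := by rw [act_invol, act_invol, one_mul]
    · have h0 : Γ.racMatrix i j = 0 := by
        show (if i = j then 1 else if Γ.Adj i j then 2 else 0) = 0
        rw [if_neg hne, if_neg hadj]
      rw [h0, pow_zero]

noncomputable def phi : G Γ →* Equiv.Perm (G Γ × Bool) :=
  Γ.racCS.lift ⟨act Γ, liftable Γ⟩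

theorem phi_simple (i : V) : phi Γ (Γ.racCS.simple i) = act Γ i :=
  Γ.racCS.lift_apply_simple (liftable Γ) i

section General

variable {B W : Type*} [Group W] {M : CoxeterMatrix B} (cs : CoxeterSystem M W)

theorem lis_cons (i : B) (ω : List B) :
    cs.leftInvSeq (i :: ω) =
      cs.simple i :: List.map (⇑(MulAut.conj (cs.simple i))) (cs.leftInvSeq ω) := rfl

theorem lis_append (α β : List B) :
    cs.leftInvSeq (α ++ β) =
      cs.leftInvSeq α ++ (cs.leftInvSeq β).map (⇑(MulAut.conj (cs.wordProd α))) := by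
  induction α with
  | nil => simp [map_one]
  | cons i α ih =>
      rw [List.cons_append, lis_cons, lis_cons, ih, List.map_append, wordProd_cons,
        List.map_map, List.cons_append]
      congr 1
      congr 1
      rw [map_mul]
      rfl

theorem leR_trans {x y z : W}
    (h1 : cs.length y = cs.length x + cs.length (x⁻¹ * y))
    (h2 : cs.length z = cs.length y + cs.length (y⁻¹ * z)) :
    cs.length z = cs.length x + cs.length (x⁻¹ * z) := by
  have A : cs.length ((x⁻¹ * y) * (y⁻¹ * z)) ≤ cs.length (x⁻¹ * y) + cs.length (y⁻¹ * z) :=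
    cs.length_mul_le _ _
  rw [show (x⁻¹ * y) * (y⁻¹ * z) = x⁻¹ * z by group] at A
  have B : cs.length (x * (x⁻¹ * z)) ≤ cs.length x + cs.length (x⁻¹ * z) := cs.length_mul_le _ _
  rw [show x * (x⁻¹ * z) = z by group] at B
  omega

end General

theorem phi_noflip (ω : List V) (t : G Γ) (ht : t ∉ Γ.racCS.leftInvSeq ω) (ε : Bool) :
    phi Γ (Γ.racCS.wordProd ω)⁻¹ (t, ε) =
      ((Γ.racCS.wordProd ω)⁻¹ * t * Γ.racCS.wordProd ω, ε) := by
  induction ω generalizing t with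
  | nil => simp
  | cons i ω ih =>
      have ht1 : t ≠ Γ.racCS.simple i := by
        intro hh
        exact ht (by rw [lis_cons]; exact hh ▸ List.mem_cons_self)
      have ht2 : Γ.racCS.simple i * t * Γ.racCS.simple i ∉ Γ.racCS.leftInvSeq ω := by
        intro hh
        apply ht
        rw [lis_cons]
        refine List.mem_cons_of_mem _ (List.mem_map.mpr ⟨_, hh, ?_⟩)
        show Γ.racCS.simple i * (Γ.racCS.simple i * t * Γ.racCS.simple i)
            * (Γ.racCS.simple i)⁻¹ = t
        rw [Γ.racCS.inv_simple, cancel3]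
      rw [wordProd_cons, mul_inv_rev, Γ.racCS.inv_simple, map_mul, Equiv.Perm.mul_apply,
        phi_simple, act_apply, if_neg ht1, ih _ ht2]
      congr 1
      group

theorem simple_mem_lis {ω : List V} (hred : Γ.racCS.IsReduced ω) {i : V}
    (h : Γ.racCS.length (Γ.racCS.simple i * Γ.racCS.wordProd ω)
      < Γ.racCS.length (Γ.racCS.wordProd ω)) :
    Γ.racCS.simple i ∈ Γ.racCS.leftInvSeq ω := by
  by_contra hmem
  obtain ⟨υ, hlen, hprod⟩ :=
    Γ.racCS.exists_reduced_word (Γ.racCS.simple i * Γ.racCS.wordProd ω)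
  have hredυ : Γ.racCS.IsReduced υ := by
    exact hlen
  have hsmem : Γ.racCS.simple i ∉ Γ.racCS.leftInvSeq υ := by
    intro hh
    have h2 := (Γ.racCS.isLeftInversion_of_mem_leftInvSeq hredυ hh).2
    rw [← hprod, Γ.racCS.simple_mul_simple_cancel_left] at h2
    exact absurd h (Nat.lt_asymm h2)
  have heq : Γ.racCS.wordProd ω = Γ.racCS.simple i * Γ.racCS.wordProd υ := by
    rw [← hprod, Γ.racCS.simple_mul_simple_cancel_left]
  have key1 := phi_noflip Γ ω (Γ.racCS.simple i) hmem false
  have key2 : phi Γ (Γ.racCS.wordProd ω)⁻¹ (Γ.racCS.simple i, false) =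
      ((Γ.racCS.wordProd υ)⁻¹ * Γ.racCS.simple i * Γ.racCS.wordProd υ, true) := by
    rw [heq, mul_inv_rev, Γ.racCS.inv_simple, map_mul, Equiv.Perm.mul_apply, phi_simple,
      act_apply, if_pos rfl]
    have : Γ.racCS.simple i * Γ.racCS.simple i * Γ.racCS.simple i = Γ.racCS.simple i := by
      rw [Γ.racCS.simple_mul_simple_self, one_mul]
    rw [this]
    exact phi_noflip Γ υ (Γ.racCS.simple i) hsmem true
  rw [key1] at key2
  exact Bool.false_ne_true (congrArg Prod.snd key2)

theorem key (v : V) (w u : G Γ)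
    (hcomm : Γ.racCS.simple v * w = w * Γ.racCS.simple v)
    (hlen : Γ.racCS.length (Γ.racCS.simple v * w) + 1 = Γ.racCS.length w)
    (hdesc : Γ.racCS.length (Γ.racCS.simple v * u) < Γ.racCS.length u)
    (hu : Γ.racCS.length u
      = Γ.racCS.length (Γ.racCS.simple v * w) + Γ.racCS.length ((Γ.racCS.simple v * w)⁻¹ * u)) :
    Γ.racCS.length (w⁻¹ * u) < Γ.racCS.length ((Γ.racCS.simple v * w)⁻¹ * u) := by
  have hss := Γ.racCS.simple_mul_simple_self v
  have hws : w⁻¹ * (Γ.racCS.simple v * w) = Γ.racCS.simple v := by rw [hcomm]; group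
  have hcomm' : w⁻¹ * Γ.racCS.simple v = Γ.racCS.simple v * w⁻¹ := by
    have h := congrArg Inv.inv hcomm
    rw [mul_inv_rev, mul_inv_rev, Γ.racCS.inv_simple] at h
    exact h
  obtain ⟨α, hαlen, hα⟩ := Γ.racCS.exists_reduced_word (Γ.racCS.simple v * w)
  obtain ⟨β, hβlen, hβ⟩ := Γ.racCS.exists_reduced_word ((Γ.racCS.simple v * w)⁻¹ * u)
  have hπ : Γ.racCS.wordProd (α ++ β) = u := by
    rw [wordProd_append, ← hα, ← hβ]
    group
  have hred : Γ.racCS.IsReduced (α ++ β) := by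
    rw [CoxeterSystem.IsReduced, hπ, List.length_append,
      ← show Γ.racCS.length (Γ.racCS.wordProd α) = α.length from hαlen,
      ← show Γ.racCS.length (Γ.racCS.wordProd β) = β.length from hβlen, ← hα, ← hβ, hu]
  have hmem := simple_mem_lis Γ hred (i := v) (by rw [hπ]; exact hdesc)
  rw [lis_append] at hmem
  rcases List.mem_append.mp hmem with hmem | hmem
  · have hredα : Γ.racCS.IsReduced α := by exact hαlen
    have h2 := (Γ.racCS.isLeftInversion_of_mem_leftInvSeq hredα hmem).2
    rw [← hα, Γ.racCS.simple_mul_simple_cancel_left] at h2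
    omega
  · obtain ⟨x, hx, hxe⟩ := List.mem_map.mp hmem
    have hxv : x = Γ.racCS.simple v := by
      have h1 : x = (Γ.racCS.wordProd α)⁻¹ * Γ.racCS.simple v * Γ.racCS.wordProd α := by
        rw [← hxe]
        show x = (Γ.racCS.wordProd α)⁻¹
          * (Γ.racCS.wordProd α * x * (Γ.racCS.wordProd α)⁻¹) * Γ.racCS.wordProd α
        group
      rw [h1, ← hα]
      calc (Γ.racCS.simple v * w)⁻¹ * Γ.racCS.simple v * (Γ.racCS.simple v * w)
          = w⁻¹ * ((Γ.racCS.simple v)⁻¹ * Γ.racCS.simple v * Γ.racCS.simple v * w) := by group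
        _ = w⁻¹ * (Γ.racCS.simple v * w) := by
            rw [Γ.racCS.inv_simple]
            congr 1
            calc Γ.racCS.simple v * Γ.racCS.simple v * Γ.racCS.simple v * w
                = (Γ.racCS.simple v * Γ.racCS.simple v) * (Γ.racCS.simple v * w) := by group
              _ = Γ.racCS.simple v * w := by rw [hss, one_mul]
        _ = Γ.racCS.simple v := hws
    have hredβ : Γ.racCS.IsReduced β := by exact hβlen
    have h2 := (Γ.racCS.isLeftInversion_of_mem_leftInvSeq hredβ (hxv ▸ hx)).2
    rw [← hβ] at h2
    have h3 : Γ.racCS.simple v * ((Γ.racCS.simple v * w)⁻¹ * u) = w⁻¹ * u := by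
      calc Γ.racCS.simple v * ((Γ.racCS.simple v * w)⁻¹ * u)
          = (Γ.racCS.simple v * w⁻¹) * ((Γ.racCS.simple v)⁻¹ * u) := by group
        _ = (w⁻¹ * Γ.racCS.simple v) * (Γ.racCS.simple v * u) := by
            rw [hcomm', Γ.racCS.inv_simple]
        _ = w⁻¹ * ((Γ.racCS.simple v * Γ.racCS.simple v) * u) := by group
        _ = w⁻¹ * u := by rw [hss, one_mul]
    rw [h3] at h2
    exact h2

end RacAux

/-- If `v` is a generator and `w ∈ W_Γ` commutes with `v` and `v ≤_R w`, then
for every `u ∈ W_Γ` one has `w ≤_R v u ↔ (v w ≤_R u ∧ ¬ w ≤_R u)`; equivalently, left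
translation by `v` maps `{u : w ≤_R u}` bijectively onto `{u : v w ≤_R u} \ {u : w ≤_R u}`. -/
theorem statement2 {V : Type*} [Fintype V] (Γ : SimpleGraph V) (v : V) (w : Γ.racGroup)
    (hcomm : Γ.racCS.simple v * w = w * Γ.racCS.simple v)
    (hle : Γ.leR (Γ.racCS.simple v) w) :
    (∀ u : Γ.racGroup,
      Γ.leR w (Γ.racCS.simple v * u) ↔
        (Γ.leR (Γ.racCS.simple v * w) u ∧ ¬ Γ.leR w u)) ∧
    Set.BijOn (fun u : Γ.racGroup => Γ.racCS.simple v * u)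
      {u | Γ.leR w u} ({u | Γ.leR (Γ.racCS.simple v * w) u} \ {u | Γ.leR w u}) := by
  classical
  have hss := Γ.racCS.simple_mul_simple_self v
  have hs1 : Γ.racCS.length (Γ.racCS.simple v) = 1 := Γ.racCS.length_simple v
  have hle' : Γ.racCS.length w
      = Γ.racCS.length (Γ.racCS.simple v)
        + Γ.racCS.length ((Γ.racCS.simple v)⁻¹ * w) := hle
  have hsw : Γ.racCS.length (Γ.racCS.simple v * w) + 1 = Γ.racCS.length w := by
    rw [hs1, Γ.racCS.inv_simple] at hle'
    omega
  have hcomm' : w⁻¹ * Γ.racCS.simple v = Γ.racCS.simple v * w⁻¹ := by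
    have h := congrArg Inv.inv hcomm
    rw [mul_inv_rev, mul_inv_rev, Γ.racCS.inv_simple] at h
    exact h
  have H : ∀ u : Γ.racGroup,
      Γ.leR w (Γ.racCS.simple v * u) ↔
        (Γ.leR (Γ.racCS.simple v * w) u ∧ ¬ Γ.leR w u) := by
    intro u
    have e1 : w⁻¹ * (Γ.racCS.simple v * u) = (Γ.racCS.simple v * w)⁻¹ * u := by
      rw [mul_inv_rev, Γ.racCS.inv_simple]
      group
    have e2 : (Γ.racCS.simple v * w)⁻¹ * u = Γ.racCS.simple v * (w⁻¹ * u) := by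
      rw [mul_inv_rev, Γ.racCS.inv_simple]
      calc w⁻¹ * Γ.racCS.simple v * u = (w⁻¹ * Γ.racCS.simple v) * u := by group
        _ = (Γ.racCS.simple v * w⁻¹) * u := by rw [hcomm']
        _ = Γ.racCS.simple v * (w⁻¹ * u) := by group
    have f1 := Γ.racCS.length_simple_mul u v
    have f2 : Γ.racCS.length ((Γ.racCS.simple v * w)⁻¹ * u)
          = Γ.racCS.length (w⁻¹ * u) + 1
        ∨ Γ.racCS.length ((Γ.racCS.simple v * w)⁻¹ * u) + 1
          = Γ.racCS.length (w⁻¹ * u) := by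
      rw [e2]
      exact Γ.racCS.length_simple_mul (w⁻¹ * u) v
    have t1 : Γ.racCS.length u
        ≤ Γ.racCS.length (Γ.racCS.simple v * w)
          + Γ.racCS.length ((Γ.racCS.simple v * w)⁻¹ * u) := by
      have h := Γ.racCS.length_mul_le (Γ.racCS.simple v * w) ((Γ.racCS.simple v * w)⁻¹ * u)
      rw [show (Γ.racCS.simple v * w) * ((Γ.racCS.simple v * w)⁻¹ * u) = u by group] at h
      exact h
    unfold SimpleGraph.leR
    rw [e1]
    constructor
    · intro h
      rcases f1 with hd | hd
      · refine ⟨by omega, ?_⟩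
        intro hwu
        have htr := RacAux.leR_trans Γ.racCS (x := Γ.racCS.simple v) (y := w) (z := u) hle' hwu
        rw [hs1, Γ.racCS.inv_simple] at htr
        omega
      · omega
    · rintro ⟨h1, h2⟩
      rcases f1 with hd | hd
      · omega
      · exfalso
        have hk := RacAux.key Γ v w u hcomm hsw (by omega) h1
        exact h2 (by omega)
  refine ⟨H, ?_, ?_, ?_⟩
  · intro u hu
    have h := H (Γ.racCS.simple v * u)
    rw [Γ.racCS.simple_mul_simple_cancel_left] at h
    exact h.mp hu
  · intro u1 _ u2 _ h
    exact mul_left_cancel h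
  · intro x hx
    refine ⟨Γ.racCS.simple v * x, (H x).mpr ⟨hx.1, hx.2⟩, ?_⟩
    show Γ.racCS.simple v * (Γ.racCS.simple v * x) = x
    exact Γ.racCS.simple_mul_simple_cancel_left v
end

section
/- Let v ∈ V be a generator and w ∈ W_Γ an element with vw = wv and not v ≤_R w. Then for every u ∈ W_Γ one has w ≤_R v·u if and only if w ≤_R u; equivalently, the set {u ∈ W_Γ : w ≤_R u} is invariant under left translation by v. -/
open CoxeterSystem
open scoped Classical

namespace Statement3Aux

open List CoxeterSystem

variable {B : Type*} {W : Type*} [Group W] {M : CoxeterMatrix B} (cs : CoxeterSystem M W)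

lemma simple_conj_conj (i : B) (y : W) :
    cs.simple i * (cs.simple i * y * cs.simple i) * cs.simple i = y := by
  have h : cs.simple i * (cs.simple i * y * cs.simple i) * cs.simple i
      = (cs.simple i * cs.simple i) * y * (cs.simple i * cs.simple i) := by group
  rw [h, cs.simple_mul_simple_self, one_mul, mul_one]

lemma simple_conj_eq_iff (i : B) (x b : W) :
    cs.simple i * x * cs.simple i = b ↔ x = cs.simple i * b * cs.simple i :=
  ⟨fun h => by rw [← h, simple_conj_conj], fun h => by rw [h, simple_conj_conj]⟩

/-- The underlying function of the reflection-counting permutation. -/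
noncomputable def sigmaFun (i : B) : W × ZMod 2 → W × ZMod 2 :=
  fun p => (cs.simple i * p.1 * cs.simple i, p.2 + if p.1 = cs.simple i then 1 else 0)

lemma sigmaFun_involutive (i : B) : Function.Involutive (sigmaFun cs i) := by
  intro p
  unfold sigmaFun
  refine Prod.ext ?_ ?_
  · exact simple_conj_conj cs i p.1
  · show p.2 + (if p.1 = cs.simple i then 1 else 0)
        + (if cs.simple i * p.1 * cs.simple i = cs.simple i then 1 else 0) = p.2
    have hc : (cs.simple i * p.1 * cs.simple i = cs.simple i) ↔ (p.1 = cs.simple i) := by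
      rw [simple_conj_eq_iff]
      simp
    rw [if_congr hc rfl rfl, add_assoc]
    by_cases h : p.1 = cs.simple i
    · rw [if_pos h]
      have h2 : (1 + 1 : ZMod 2) = 0 := by decide
      rw [h2, add_zero]
    · simp [h]

/-- The permutation of `W × ZMod 2` associated to the simple reflection `i`. -/
noncomputable def sigma (i : B) : Equiv.Perm (W × ZMod 2) :=
  Function.Involutive.toPerm (sigmaFun cs i) (sigmaFun_involutive cs i)

lemma sigma_apply (i : B) (p : W × ZMod 2) : sigma cs i p = sigmaFun cs i p := rfl

lemma sigma_mul_self (i : B) : sigma cs i * sigma cs i = 1 :=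
  Equiv.ext fun p => sigmaFun_involutive cs i p

lemma sigma_comm {i j : B} (hc : cs.simple i * cs.simple j = cs.simple j * cs.simple i) :
    sigma cs i * sigma cs j = sigma cs j * sigma cs i := by
  have hji : cs.simple j * cs.simple i * cs.simple j = cs.simple i := by
    rw [mul_assoc, hc, ← mul_assoc, cs.simple_mul_simple_self, one_mul]
  have hij : cs.simple i * cs.simple j * cs.simple i = cs.simple j := by
    rw [hc, mul_assoc, cs.simple_mul_simple_self, mul_one]
  refine Equiv.ext fun p => ?_
  show sigmaFun cs i (sigmaFun cs j p) = sigmaFun cs j (sigmaFun cs i p)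
  unfold sigmaFun
  refine Prod.ext ?_ ?_
  · show cs.simple i * (cs.simple j * p.1 * cs.simple j) * cs.simple i
        = cs.simple j * (cs.simple i * p.1 * cs.simple i) * cs.simple j
    have h1 : cs.simple i * (cs.simple j * p.1 * cs.simple j) * cs.simple i
        = (cs.simple i * cs.simple j) * p.1 * (cs.simple j * cs.simple i) := by group
    have h2 : cs.simple j * (cs.simple i * p.1 * cs.simple i) * cs.simple j
        = (cs.simple j * cs.simple i) * p.1 * (cs.simple i * cs.simple j) := by group
    rw [h1, h2, hc]
  · show p.2 + (if p.1 = cs.simple j then 1 else 0)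
        + (if cs.simple j * p.1 * cs.simple j = cs.simple i then 1 else 0)
      = p.2 + (if p.1 = cs.simple i then 1 else 0)
        + (if cs.simple i * p.1 * cs.simple i = cs.simple j then 1 else 0)
    have e1 : (cs.simple j * p.1 * cs.simple j = cs.simple i) ↔ (p.1 = cs.simple i) := by
      rw [simple_conj_eq_iff, hji]
    have e2 : (cs.simple i * p.1 * cs.simple i = cs.simple j) ↔ (p.1 = cs.simple j) := by
      rw [simple_conj_eq_iff, hij]
    rw [if_congr e1 rfl rfl, if_congr e2 rfl rfl]
    ring

section Lift

variable (hlift : M.IsLiftable (fun i => sigma cs i))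

/-- The reflection-counting homomorphism. -/
noncomputable def mu : W →* Equiv.Perm (W × ZMod 2) :=
  cs.lift ⟨fun i => sigma cs i, hlift⟩

lemma mu_simple (i : B) : mu cs hlift (cs.simple i) = sigma cs i :=
  cs.lift_apply_simple hlift i

lemma mu_wordProd (ω : List B) (t : W) (ε : ZMod 2) :
    mu cs hlift (cs.wordProd ω) (t, ε)
      = (cs.wordProd ω * t * (cs.wordProd ω)⁻¹,
          ε + ((cs.rightInvSeq ω).count t : ZMod 2)) := by
  induction ω with
  | nil => simp [mu]
  | cons i ω ih =>
    rw [cs.wordProd_cons, map_mul, Equiv.Perm.mul_apply, ih, mu_simple, sigma_apply]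
    unfold sigmaFun
    have hris : cs.rightInvSeq (i :: ω)
        = ((cs.wordProd ω)⁻¹ * cs.simple i * cs.wordProd ω) :: cs.rightInvSeq ω := rfl
    refine Prod.ext ?_ ?_
    · show cs.simple i * (cs.wordProd ω * t * (cs.wordProd ω)⁻¹) * cs.simple i
          = (cs.simple i * cs.wordProd ω) * t * (cs.simple i * cs.wordProd ω)⁻¹
      rw [mul_inv_rev, cs.inv_simple]
      group
    · show ε + ((cs.rightInvSeq ω).count t : ZMod 2)
          + (if cs.wordProd ω * t * (cs.wordProd ω)⁻¹ = cs.simple i then 1 else 0)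
        = ε + ((cs.rightInvSeq (i :: ω)).count t : ZMod 2)
      rw [hris, List.count_cons]
      have hcond : (cs.wordProd ω * t * (cs.wordProd ω)⁻¹ = cs.simple i)
          ↔ (((cs.wordProd ω)⁻¹ * cs.simple i * cs.wordProd ω) = t) := by
        constructor
        · intro h
          rw [← h]; group
        · intro h
          rw [← h]; group
      rw [if_congr hcond rfl rfl]
      push_cast
      simp only [beq_iff_eq]
      ring

lemma mu_snd_eq_one_of_descent (w : W) (i : B)
    (hlt : cs.length (w * cs.simple i) < cs.length w) :
    (mu cs hlift w (cs.simple i, 0)).2 = 1 := by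
  obtain ⟨ω', hred, hw'⟩ := cs.exists_reduced_word' (w * cs.simple i)
  have hmem : cs.simple i ∉ cs.rightInvSeq ω' := by
    intro hmem
    have h2 := (cs.isRightInversion_of_mem_rightInvSeq hred hmem).2
    rw [← hw', mul_assoc, cs.simple_mul_simple_self, mul_one] at h2
    omega
  have hcount : (cs.rightInvSeq ω').count (cs.simple i) = 0 :=
    List.count_eq_zero.mpr hmem
  have hw : w = (w * cs.simple i) * cs.simple i := by
    rw [mul_assoc, cs.simple_mul_simple_self, mul_one]
  rw [hw, map_mul, Equiv.Perm.mul_apply, mu_simple, sigma_apply]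
  have : sigmaFun cs i ((cs.simple i : W), (0 : ZMod 2)) = (cs.simple i, 1) := by
    unfold sigmaFun
    refine Prod.ext ?_ ?_
    · show cs.simple i * cs.simple i * cs.simple i = cs.simple i
      rw [cs.simple_mul_simple_self, one_mul]
    · simp
  rw [this, hw', mu_wordProd, hcount]
  simp

/-- Exchange property for simple right descents. -/
lemma exchange (hl : M.IsLiftable (fun i => sigma cs i)) (ω : List B) (hred : cs.IsReduced ω) (i : B)
    (hlt : cs.length (cs.wordProd ω * cs.simple i) < cs.length (cs.wordProd ω)) :
    ∃ j < ω.length, cs.wordProd ω * cs.simple i = cs.wordProd (ω.eraseIdx j) := by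
  have h2 := mu_snd_eq_one_of_descent cs hl (cs.wordProd ω) i hlt
  rw [mu_wordProd] at h2
  simp only [zero_add] at h2
  have hmem : cs.simple i ∈ cs.rightInvSeq ω := by
    by_contra hmem
    rw [List.count_eq_zero.mpr hmem] at h2
    simp at h2
  obtain ⟨j, hj, hget⟩ := List.mem_iff_getElem.mp hmem
  have hj' : j < ω.length := by
    have := cs.length_rightInvSeq ω
    omega
  refine ⟨j, hj', ?_⟩
  rw [← cs.wordProd_mul_getD_rightInvSeq ω j, List.getD_eq_getElem _ _ hj, hget]

end Lift

end Statement3Aux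

namespace Statement3Aux

variable {V : Type*} (Γ : SimpleGraph V)

lemma rac_liftable : Γ.racMatrix.IsLiftable (fun i => sigma Γ.racCS i) := by
  intro i j
  by_cases hij : i = j
  · subst hij
    have hd : Γ.racMatrix i i = 1 := Γ.racMatrix.diagonal i
    rw [hd, pow_one]
    exact sigma_mul_self Γ.racCS i
  · by_cases hadj : Γ.Adj i j
    · have hM : Γ.racMatrix i j = 2 := by
        show (if i = j then 1 else if Γ.Adj i j then 2 else 0) = 2
        rw [if_neg hij, if_pos hadj]
      have h2 := Γ.racCS.simple_mul_simple_pow i j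
      rw [hM] at h2
      rw [hM]
      have hcomm : Γ.racCS.simple i * Γ.racCS.simple j
          = Γ.racCS.simple j * Γ.racCS.simple i := by
        have ha : (Γ.racCS.simple i * Γ.racCS.simple j)
            * (Γ.racCS.simple i * Γ.racCS.simple j) = 1 := by
          rw [← pow_two]; exact h2
        have hb := eq_inv_of_mul_eq_one_left ha
        rwa [mul_inv_rev, Γ.racCS.inv_simple, Γ.racCS.inv_simple] at hb
      have hs := sigma_comm Γ.racCS hcomm
      rw [pow_two]
      calc (sigma Γ.racCS i * sigma Γ.racCS j) * (sigma Γ.racCS i * sigma Γ.racCS j)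
          = sigma Γ.racCS i * ((sigma Γ.racCS j * sigma Γ.racCS i) * sigma Γ.racCS j) := by
            group
        _ = sigma Γ.racCS i * ((sigma Γ.racCS i * sigma Γ.racCS j) * sigma Γ.racCS j) := by
            rw [hs]
        _ = (sigma Γ.racCS i * sigma Γ.racCS i) * (sigma Γ.racCS j * sigma Γ.racCS j) := by
            group
        _ = 1 := by rw [sigma_mul_self, sigma_mul_self, one_mul]
    · have hM : Γ.racMatrix i j = 0 := by
        show (if i = j then 1 else if Γ.Adj i j then 2 else 0) = 0
        rw [if_neg hij, if_neg hadj]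
      rw [hM, pow_zero]

lemma inv_comm {v : V} {w : Γ.racGroup}
    (hcomm : Γ.racCS.simple v * w = w * Γ.racCS.simple v) :
    w⁻¹ * Γ.racCS.simple v = Γ.racCS.simple v * w⁻¹ := by
  calc w⁻¹ * Γ.racCS.simple v
      = w⁻¹ * (Γ.racCS.simple v * w) * w⁻¹ := by group
    _ = w⁻¹ * (w * Γ.racCS.simple v) * w⁻¹ := by rw [hcomm]
    _ = Γ.racCS.simple v * w⁻¹ := by group

lemma lemL (v : V) (w x : Γ.racGroup)
    (hcomm : Γ.racCS.simple v * w = w * Γ.racCS.simple v)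
    (hsw : Γ.racCS.length (Γ.racCS.simple v * w) = Γ.racCS.length w + 1)
    (hux : Γ.racCS.length (w * x) = Γ.racCS.length w + Γ.racCS.length x)
    (hlt : Γ.racCS.length (Γ.racCS.simple v * (w * x)) < Γ.racCS.length (w * x)) :
    Γ.racCS.length (Γ.racCS.simple v * x) < Γ.racCS.length x := by
  obtain ⟨ωw, hw_len, hw_eq⟩ := Γ.racCS.exists_reduced_word w⁻¹
  obtain ⟨ωx, hx_len, hx_eq⟩ := Γ.racCS.exists_reduced_word x⁻¹
  have hπ : Γ.racCS.wordProd (ωx ++ ωw) = (w * x)⁻¹ := by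
    rw [Γ.racCS.wordProd_append, ← hx_eq, ← hw_eq, mul_inv_rev]
  have hred : Γ.racCS.IsReduced (ωx ++ ωw) := by
    unfold CoxeterSystem.IsReduced
    rw [hπ, Γ.racCS.length_inv, hux, List.length_append, ← hx_len, ← hw_len, ← hx_eq, ← hw_eq,
      Γ.racCS.length_inv, Γ.racCS.length_inv]
    omega
  have hlt' : Γ.racCS.length (Γ.racCS.wordProd (ωx ++ ωw) * Γ.racCS.simple v)
      < Γ.racCS.length (Γ.racCS.wordProd (ωx ++ ωw)) := by
    rw [hπ]
    have h1 : (w * x)⁻¹ * Γ.racCS.simple v = (Γ.racCS.simple v * (w * x))⁻¹ := by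
      rw [mul_inv_rev (Γ.racCS.simple v) (w * x), Γ.racCS.inv_simple]
    rw [h1, Γ.racCS.length_inv, Γ.racCS.length_inv]
    exact hlt
  obtain ⟨j, hj, hex⟩ := exchange Γ.racCS (rac_liftable Γ) (ωx ++ ωw) hred v hlt'
  rw [hπ] at hex
  rw [List.length_append] at hj
  by_cases hcase : j < ωx.length
  · rw [List.eraseIdx_append_of_lt_length hcase, Γ.racCS.wordProd_append, ← hw_eq] at hex
    have h1 : (w * x)⁻¹ * Γ.racCS.simple v = (x⁻¹ * Γ.racCS.simple v) * w⁻¹ := by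
      rw [mul_inv_rev, mul_assoc, inv_comm Γ hcomm, ← mul_assoc]
    rw [h1] at hex
    have hex2 : x⁻¹ * Γ.racCS.simple v = Γ.racCS.wordProd (ωx.eraseIdx j) :=
      mul_right_cancel hex
    have hle : Γ.racCS.length (x⁻¹ * Γ.racCS.simple v) ≤ (ωx.eraseIdx j).length := by
      rw [hex2]; exact Γ.racCS.length_wordProd_le _
    have hlj := List.length_eraseIdx_add_one hcase
    have hflip : Γ.racCS.length (Γ.racCS.simple v * x)
        = Γ.racCS.length (x⁻¹ * Γ.racCS.simple v) := by
      have h2 : (x⁻¹ * Γ.racCS.simple v)⁻¹ = Γ.racCS.simple v * x := by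
        rw [mul_inv_rev, Γ.racCS.inv_simple, inv_inv]
      rw [← h2, Γ.racCS.length_inv]
    have hxinv := Γ.racCS.length_inv x
    have hx_len' : ωx.length = Γ.racCS.length x⁻¹ := by
      rw [hx_eq]; exact (hx_len : Γ.racCS.length (Γ.racCS.wordProd ωx) = ωx.length).symm
    omega
  · exfalso
    rw [List.eraseIdx_append_of_length_le (le_of_not_gt hcase),
      Γ.racCS.wordProd_append, ← hx_eq] at hex
    have h1 : (w * x)⁻¹ * Γ.racCS.simple v = x⁻¹ * (w⁻¹ * Γ.racCS.simple v) := by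
      rw [mul_inv_rev, mul_assoc]
    rw [h1] at hex
    have hex2 : w⁻¹ * Γ.racCS.simple v = Γ.racCS.wordProd (ωw.eraseIdx (j - ωx.length)) :=
      mul_left_cancel hex
    have hle : Γ.racCS.length (w⁻¹ * Γ.racCS.simple v)
        ≤ (ωw.eraseIdx (j - ωx.length)).length := by
      rw [hex2]; exact Γ.racCS.length_wordProd_le _
    have hj2 : j - ωx.length < ωw.length := by omega
    have hlj := List.length_eraseIdx_add_one hj2
    have hflip : Γ.racCS.length (Γ.racCS.simple v * w)
        = Γ.racCS.length (w⁻¹ * Γ.racCS.simple v) := by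
      have h2 : (w⁻¹ * Γ.racCS.simple v)⁻¹ = Γ.racCS.simple v * w := by
        rw [mul_inv_rev, Γ.racCS.inv_simple, inv_inv]
      rw [← h2, Γ.racCS.length_inv]
    have hwinv := Γ.racCS.length_inv w
    have hw_len' : ωw.length = Γ.racCS.length w⁻¹ := by
      rw [hw_eq]; exact (hw_len : Γ.racCS.length (Γ.racCS.wordProd ωw) = ωw.length).symm
    omega

lemma forward (v : V) (w : Γ.racGroup)
    (hcomm : Γ.racCS.simple v * w = w * Γ.racCS.simple v)
    (hsw : Γ.racCS.length (Γ.racCS.simple v * w) = Γ.racCS.length w + 1)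
    (u : Γ.racGroup) (h : Γ.leR w u) : Γ.leR w (Γ.racCS.simple v * u) := by
  unfold SimpleGraph.leR at h ⊢
  set x := w⁻¹ * u with hx
  have hu : u = w * x := by rw [hx, mul_inv_cancel_left]
  have hxs : w⁻¹ * (Γ.racCS.simple v * u) = Γ.racCS.simple v * x := by
    rw [← mul_assoc, inv_comm Γ hcomm, mul_assoc, ← hx]
  rw [hxs]
  rcases Γ.racCS.length_simple_mul u v with h1 | h1
  · rcases Γ.racCS.length_simple_mul x v with h2 | h2
    · omega
    · exfalso
      have hkey : Γ.racCS.simple v * u = w * (Γ.racCS.simple v * x) := by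
        rw [hu, ← mul_assoc, hcomm, mul_assoc]
      have hle := Γ.racCS.length_mul_le w (Γ.racCS.simple v * x)
      rw [← hkey] at hle
      omega
  · have hlt : Γ.racCS.length (Γ.racCS.simple v * (w * x))
        < Γ.racCS.length (w * x) := by
      rw [← hu]; omega
    have hxlt := lemL Γ v w x hcomm hsw (by rw [← hu]; exact h) hlt
    rcases Γ.racCS.length_simple_mul x v with h2 | h2
    · omega
    · omega

end Statement3Aux

/-- If `v` is a generator and `w ∈ W_Γ` commutes with `v` but `v ≤_R w` fails,
then for every `u ∈ W_Γ` one has `w ≤_R v u ↔ w ≤_R u`; equivalently, the set `{u : w ≤_R u}`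
is invariant under left translation by `v`. -/
theorem statement3 {V : Type*} [Fintype V] (Γ : SimpleGraph V) (v : V) (w : Γ.racGroup)
    (hcomm : Γ.racCS.simple v * w = w * Γ.racCS.simple v)
    (hnle : ¬ Γ.leR (Γ.racCS.simple v) w) :
    (∀ u : Γ.racGroup, Γ.leR w (Γ.racCS.simple v * u) ↔ Γ.leR w u) ∧
    (fun u : Γ.racGroup => Γ.racCS.simple v * u) '' {u | Γ.leR w u} = {u | Γ.leR w u} := by
  have hsw : Γ.racCS.length (Γ.racCS.simple v * w) = Γ.racCS.length w + 1 := by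
    unfold SimpleGraph.leR at hnle
    rw [Γ.racCS.length_simple, Γ.racCS.inv_simple] at hnle
    rcases Γ.racCS.length_simple_mul w v with h | h
    · exact h
    · exfalso; exact hnle (by omega)
  have hiff : ∀ u : Γ.racGroup, Γ.leR w (Γ.racCS.simple v * u) ↔ Γ.leR w u := by
    intro u
    constructor
    · intro h
      have h2 := Statement3Aux.forward Γ v w hcomm hsw (Γ.racCS.simple v * u) h
      rwa [Γ.racCS.simple_mul_simple_cancel_left] at h2
    · exact Statement3Aux.forward Γ v w hcomm hsw u
  refine ⟨hiff, ?_⟩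
  ext u
  simp only [Set.mem_image, Set.mem_setOf_eq]
  constructor
  · rintro ⟨u', hu', rfl⟩
    exact (hiff u').mpr hu'
  · intro hu
    exact ⟨Γ.racCS.simple v * u, (hiff u).mpr hu,
      by rw [Γ.racCS.simple_mul_simple_cancel_left]⟩
end

section
/- Let (t_1,…,t_n) be a closed walk in the complement Γᶜ, let g := t_1⋯t_n ∈ W_Γ, and let x ∈ W_Γ be an element ending in t_n, i.e. ℓ(x·t_n) = ℓ(x) − 1. Then for every L ∈ ℕ one has ℓ(x·g^L) = ℓ(x) + nL. -/
open CoxeterSystem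
open scoped Classical

namespace Statement5Aux

open List

theorem sandwich {W : Type*} [Group W] (a : W) (ha : a * a = 1) (t : W) :
    a * (a * t * a) * a = t := by
  have h : a * (a * t * a) * a = (a * a) * t * (a * a) := by group
  rw [h, ha, one_mul, mul_one]

theorem conj_eq_iff {W : Type*} [Group W] (a : W) (ha : a * a = 1) (t x : W) :
    a * t * a = x ↔ t = a * x * a :=
  ⟨fun h => by rw [← h, sandwich a ha], fun h => by rw [h, sandwich a ha]⟩

theorem zmod2_cancel2 (ε x : ZMod 2) : ε + x + x = ε := by
  calc ε + x + x = ε + (x + x) := by ring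
  _ = ε := by rw [CharTwo.add_self_eq_zero, add_zero]

theorem zmod2_cancel4 (ε x y : ZMod 2) : ε + x + y + x + y = ε := by
  calc ε + x + y + x + y = ε + (x + x) + (y + y) := by ring
  _ = ε := by rw [CharTwo.add_self_eq_zero, CharTwo.add_self_eq_zero, add_zero, add_zero]

variable {V : Type*} (Γ : SimpleGraph V)

local notation "ss" => CoxeterSystem.simple (SimpleGraph.racCS Γ)
local notation "WG" => SimpleGraph.racGroup Γ

theorem racMatrix_apply (v w : V) :
    Γ.racMatrix v w = if v = w then 1 else if Γ.Adj v w then 2 else 0 := rfl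

theorem simple_comm {v w : V} (h : Γ.Adj v w) :
    ss v * ss w = ss w * ss v := by
  have h2 : (ss v * ss w) ^ Γ.racMatrix v w = 1 := (SimpleGraph.racCS Γ).simple_mul_simple_pow v w
  rw [racMatrix_apply, if_neg h.ne, if_pos h] at h2
  have h3 : (ss v * ss w) * (ss v * ss w) = 1 := by
    rw [← pow_two]; exact h2
  calc ss v * ss w
      = (ss v * ss w) * ((ss v * ss w) * (ss w * ss v)) := by
        rw [show (ss v * ss w) * (ss w * ss v)
            = ss v * (ss w * ss w) * ss v by group,
          (SimpleGraph.racCS Γ).simple_mul_simple_self, mul_one, (SimpleGraph.racCS Γ).simple_mul_simple_self, mul_one]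
    _ = ss w * ss v := by rw [← mul_assoc, h3, one_mul]

noncomputable def sigmaFun (i : V) : WG × ZMod 2 → WG × ZMod 2 :=
  fun p => (ss i * p.1 * ss i, p.2 + if p.1 = ss i then 1 else 0)

theorem sigmaFun_involutive (i : V) : Function.Involutive (sigmaFun Γ i) := by
  intro p
  obtain ⟨t, ε⟩ := p
  have ha := (SimpleGraph.racCS Γ).simple_mul_simple_self i
  have h3 : ss i * ss i * ss i = ss i := by rw [ha, one_mul]
  apply Prod.ext
  · exact sandwich _ ha t
  · show (ε + _) + _ = ε
    simp only [sigmaFun, conj_eq_iff _ ha t (ss i), h3]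
    exact zmod2_cancel2 ε _

noncomputable def sigma (i : V) : Equiv.Perm (WG × ZMod 2) :=
  (sigmaFun_involutive Γ i).toPerm

theorem sigma_apply (i : V) (t : WG) (ε : ZMod 2) :
    sigma Γ i (t, ε) = (ss i * t * ss i, ε + if t = ss i then 1 else 0) := rfl

theorem sigma_liftable : (Γ.racMatrix).IsLiftable (sigma Γ) := by
  intro i j
  rcases eq_or_ne i j with rfl | hij
  · rw [racMatrix_apply, if_pos rfl, pow_one]
    ext p : 1
    exact (sigmaFun_involutive Γ i) p
  · rw [racMatrix_apply, if_neg hij]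
    by_cases hadj : Γ.Adj i j
    · rw [if_pos hadj]
      have hcomm := simple_comm Γ hadj
      have hi := (SimpleGraph.racCS Γ).simple_mul_simple_self i
      have hj := (SimpleGraph.racCS Γ).simple_mul_simple_self j
      have hiii : ss i * ss i * ss i = ss i := by rw [hi, one_mul]
      have hjjj : ss j * ss j * ss j = ss j := by rw [hj, one_mul]
      have hjij : ss j * ss i * ss j = ss i := by
        rw [← hcomm, mul_assoc, hj, mul_one]
      have hiji : ss i * ss j * ss i = ss j := by
        rw [hcomm, mul_assoc, hi, mul_one]
      have c2 : ∀ t : WG, (ss j * t * ss j = ss i) ↔ t = ss i := by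
        intro t; rw [conj_eq_iff _ hj, hjij]
      have c3 : ∀ t : WG,
          (ss i * (ss j * t * ss j) * ss i = ss j)
          ↔ t = ss j := by
        intro t; rw [conj_eq_iff _ hi, hiji, conj_eq_iff _ hj, hjjj]
      have c4 : ∀ t : WG,
          (ss i * (ss j * t * ss j) * ss i = ss i) ↔ t = ss i := by
        intro t; rw [conj_eq_iff _ hi, hiii, conj_eq_iff _ hj, hjij]
      ext p : 1
      obtain ⟨t, ε⟩ := p
      show ((sigma Γ i * sigma Γ j) * ((sigma Γ i * sigma Γ j) ^ 1)) (t, ε) = (t, ε)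
      rw [pow_one]
      simp only [Equiv.Perm.mul_apply, sigma_apply]
      apply Prod.ext
      · show ss i * (ss j * (ss i * (ss j * t * ss j) *
          ss i) * ss j) * ss i = t
        calc ss i * (ss j * (ss i * (ss j * t * ss j) *
              ss i) * ss j) * ss i
            = ((ss i * ss j * ss i) * ss j) * t *
              ((ss j * ss i * ss j) * ss i) := by group
          _ = t := by rw [hiji, hj, hjij, hi, one_mul, mul_one]
      · show (((ε + _) + _) + _) + _ = ε
        simp only [c2, c3, c4]
        exact zmod2_cancel4 ε _ _
    · rw [if_neg hadj, pow_zero]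

/-- The Tits permutation representation. -/
noncomputable def P : WG →* Equiv.Perm (WG × ZMod 2) :=
  (SimpleGraph.racCS Γ).lift ⟨sigma Γ, sigma_liftable Γ⟩

theorem P_simple (i : V) : P Γ (ss i) = sigma Γ i :=
  CoxeterSystem.lift_apply_simple _ (sigma_liftable Γ) i

theorem P_fst (w : WG) : ∀ t ε, ((P Γ w) (t, ε)).1 = w * t * w⁻¹ := by
  induction w using CoxeterSystem.simple_induction (SimpleGraph.racCS Γ) with
  | simple i =>
      intro t ε
      rw [P_simple]
      show ss i * t * ss i = ss i * t * (ss i)⁻¹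
      rw [CoxeterSystem.inv_simple]
  | one => intro t ε; simp
  | mul u v hu hv =>
      intro t ε
      rw [map_mul, Equiv.Perm.mul_apply]
      have h1 : (P Γ v) (t, ε) = (v * t * v⁻¹, ((P Γ v) (t, ε)).2) := by
        apply Prod.ext
        · exact hv t ε
        · rfl
      rw [h1, hu]
      group

theorem P_snd (w : WG) : ∀ t ε, ((P Γ w) (t, ε)).2 = ε + ((P Γ w) (t, 0)).2 := by
  induction w using CoxeterSystem.simple_induction (SimpleGraph.racCS Γ) with
  | simple i =>
      intro t ε
      rw [P_simple]
      show (ε + _) = ε + (0 + _)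
      rw [zero_add]
  | one => intro t ε; simp
  | mul u v hu hv =>
      intro t ε
      rw [map_mul, Equiv.Perm.mul_apply, Equiv.Perm.mul_apply]
      have h1 : (P Γ v) (t, ε) = (v * t * v⁻¹, ε + ((P Γ v) (t, 0)).2) := by
        apply Prod.ext
        · exact P_fst Γ v t ε
        · exact hv t ε
      have h2 : (P Γ v) (t, 0) = (v * t * v⁻¹, ((P Γ v) (t, 0)).2) :=
        Prod.ext (P_fst Γ v t 0) rfl
      conv_lhs => rw [h1]
      conv_rhs => rw [h2]
      rw [hu (v * t * v⁻¹) (ε + ((P Γ v) (t, 0)).2), hu (v * t * v⁻¹) (((P Γ v) (t, 0)).2)]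
      ring

/-- The parity cocycle. -/
noncomputable def nu (w t : WG) : ZMod 2 := ((P Γ w) (t, 0)).2

theorem P_apply (w t : WG) (ε : ZMod 2) : (P Γ w) (t, ε) = (w * t * w⁻¹, ε + nu Γ w t) :=
  Prod.ext (P_fst Γ w t ε) (P_snd Γ w t ε)

theorem nu_one (t : WG) : nu Γ 1 t = 0 := by
  simp [nu]

theorem nu_simple (i : V) (t : WG) : nu Γ (ss i) t = if t = ss i then 1 else 0 := by
  show ((P Γ (ss i)) (t, 0)).2 = _
  rw [P_simple]
  show (0 + _ : ZMod 2) = _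
  rw [zero_add]

theorem nu_mul (u v t : WG) : nu Γ (u * v) t = nu Γ v t + nu Γ u (v * t * v⁻¹) := by
  show ((P Γ (u * v)) (t, 0)).2 = _
  rw [map_mul, Equiv.Perm.mul_apply]
  have h1 : (P Γ v) (t, 0) = (v * t * v⁻¹, nu Γ v t) := Prod.ext (P_fst Γ v t 0) rfl
  rw [h1, P_snd Γ u]
  rfl

theorem nu_inv (u t : WG) : nu Γ u⁻¹ t = nu Γ u (u⁻¹ * t * u) := by
  have h0 : nu Γ (u * u⁻¹) t = 0 := by rw [mul_inv_cancel]; exact nu_one Γ t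
  rw [nu_mul, inv_inv] at h0
  have h1 := add_eq_zero_iff_eq_neg.mp h0
  rw [h1, CharTwo.neg_eq]

theorem nu_refl_self {t : WG} (ht : (SimpleGraph.racCS Γ).IsReflection t) : nu Γ t t = 1 := by
  obtain ⟨u, i, rfl⟩ := ht
  rw [show u * ss i * u⁻¹ = (u * ss i) * u⁻¹ from rfl, nu_mul, nu_inv]
  rw [show u⁻¹ * (u * ss i * u⁻¹) * u = ss i by group,
    show u⁻¹ * (u * ss i * u⁻¹) * u⁻¹⁻¹ = ss i by group]
  rw [nu_mul, show ss i * ss i * (ss i)⁻¹ = ss i by group, nu_simple, if_pos rfl]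
  have h2 := CharTwo.add_self_eq_zero (nu Γ u (ss i))
  linear_combination h2

theorem mem_ris_of_nu (ω : List V) (t : WG) (h : nu Γ ((SimpleGraph.racCS Γ).wordProd ω) t = 1) :
    t ∈ (SimpleGraph.racCS Γ).rightInvSeq ω := by
  induction ω generalizing t with
  | nil =>
      rw [CoxeterSystem.wordProd_nil, nu_one] at h
      exact absurd h (by decide)
  | cons i ω ih =>
      rw [CoxeterSystem.wordProd_cons, nu_mul] at h
      by_cases hc : (SimpleGraph.racCS Γ).wordProd ω * t * ((SimpleGraph.racCS Γ).wordProd ω)⁻¹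
          = ss i
      · have : t = ((SimpleGraph.racCS Γ).wordProd ω)⁻¹ * ss i *
            (SimpleGraph.racCS Γ).wordProd ω := by
          rw [← hc]; group
        rw [this]
        exact List.mem_cons_self
      · rw [nu_simple, if_neg hc, add_zero] at h
        exact List.mem_cons_of_mem _ (ih t h)

theorem nu_eq_one_of_descent {w t : WG} (ht : (SimpleGraph.racCS Γ).IsReflection t)
    (hlt : (SimpleGraph.racCS Γ).length (w * t) < (SimpleGraph.racCS Γ).length w) :
    nu Γ w t = 1 := by
  by_contra h
  have h0 : nu Γ w t = 0 := by
    have : ∀ x : ZMod 2, x = 0 ∨ x = 1 := by decide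
    rcases this (nu Γ w t) with h' | h'
    · exact h'
    · exact absurd h' h
  have hwt : nu Γ (w * t) t = 1 := by
    rw [nu_mul, nu_refl_self Γ ht, show t * t * t⁻¹ = t by group, h0, add_zero]
  obtain ⟨τ, hτred, hτ⟩ := (SimpleGraph.racCS Γ).exists_reduced_word' (w * t)
  rw [hτ] at hwt
  have hmem := mem_ris_of_nu Γ τ t hwt
  have hinv := (SimpleGraph.racCS Γ).isRightInversion_of_mem_rightInvSeq hτred hmem
  have : (SimpleGraph.racCS Γ).length (w * t * t) < (SimpleGraph.racCS Γ).length (w * t) := by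
    rw [hτ]; exact hinv.2
  rw [mul_assoc, ht.mul_self, mul_one] at this
  omega

/-- The (strong) exchange property, for simple reflections. -/
theorem exchange {w : WG} {c : V}
    (hlt : (SimpleGraph.racCS Γ).length (w * ss c) < (SimpleGraph.racCS Γ).length w)
    (ω : List V) (hw : w = (SimpleGraph.racCS Γ).wordProd ω) :
    ∃ j < ω.length, w * ss c = (SimpleGraph.racCS Γ).wordProd (ω.eraseIdx j) := by
  have hnu : nu Γ w (ss c) = 1 :=
    nu_eq_one_of_descent Γ ((SimpleGraph.racCS Γ).isReflection_simple c) hlt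
  rw [hw] at hnu
  have hmem := mem_ris_of_nu Γ ω (ss c) hnu
  obtain ⟨j, hj, hjt⟩ := List.getElem_of_mem hmem
  rw [CoxeterSystem.length_rightInvSeq] at hj
  refine ⟨j, hj, ?_⟩
  have := (SimpleGraph.racCS Γ).wordProd_mul_getD_rightInvSeq ω j
  rw [List.getD_eq_getElem _ _ (by rwa [CoxeterSystem.length_rightInvSeq])] at this
  rw [hw, ← hjt, this]

section Dihedral

open DihedralGroup

variable {a b : V}

/-- Generator map for the dihedral quotient killing all generators except `a`, `b`. -/
noncomputable def dihF (a b : V) : V → DihedralGroup 0 :=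
  fun v => if v = a then sr 0 else if v = b then sr 1 else 1

theorem dihF_sq (v : V) : dihF (V := V) a b v * dihF a b v = 1 := by
  unfold dihF
  split_ifs <;> simp [sr_mul_sr]

theorem dihF_liftable (hne : a ≠ b) (hnadj : ¬ Γ.Adj a b) :
    (Γ.racMatrix).IsLiftable (dihF a b) := by
  intro v u
  rcases eq_or_ne v u with rfl | hvu
  · rw [racMatrix_apply, if_pos rfl, pow_one]
    exact dihF_sq v
  · rw [racMatrix_apply, if_neg hvu]
    by_cases hadj : Γ.Adj v u
    · rw [if_pos hadj]
      have key : dihF (V := V) a b v = 1 ∨ dihF (V := V) a b u = 1 := by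
        by_contra hcon
        push_neg at hcon
        obtain ⟨h1, h2⟩ := hcon
        have hv' : v = a ∨ v = b := by
          by_contra hv
          push_neg at hv
          simp [dihF, hv.1, hv.2] at h1
        have hu' : u = a ∨ u = b := by
          by_contra hu
          push_neg at hu
          simp [dihF, hu.1, hu.2] at h2
        rcases hv' with rfl | rfl <;> rcases hu' with rfl | rfl
        · exact hvu rfl
        · exact hnadj hadj
        · exact hnadj (Γ.adj_symm hadj)
        · exact hvu rfl
      rcases key with h | h
      · rw [h, one_mul, pow_two]; exact dihF_sq u
      · rw [h, mul_one, pow_two]; exact dihF_sq v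
    · rw [if_neg hadj, pow_zero]

/-- The dihedral quotient homomorphism. -/
noncomputable def psi (hne : a ≠ b) (hnadj : ¬ Γ.Adj a b) : WG →* DihedralGroup 0 :=
  (SimpleGraph.racCS Γ).lift ⟨dihF a b, dihF_liftable Γ hne hnadj⟩

theorem psi_simple (hne : a ≠ b) (hnadj : ¬ Γ.Adj a b) (v : V) :
    psi Γ hne hnadj (ss v) = dihF a b v :=
  CoxeterSystem.lift_apply_simple _ _ v

end Dihedral

/-- The alternating word `[b, a, b, a, ...]` of length `k`, built by appending. -/
def Sword (a b : V) : ℕ → List V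
  | 0 => []
  | k + 1 => Sword a b k ++ [if Even k then b else a]

theorem Sword_length (a b : V) (k : ℕ) : (Sword a b k).length = k := by
  induction k with
  | zero => rfl
  | succ k ih => simp [Sword, ih]

theorem Sword_take (a b : V) : ∀ {j k : ℕ}, j ≤ k → (Sword a b k).take j = Sword a b j := by
  intro j k
  induction k with
  | zero => intro hj; interval_cases j; rfl
  | succ k ih =>
      intro hj
      rcases Nat.lt_or_ge j (k + 1) with h | h
      · have hjk : j ≤ k := by omega
        rw [Sword, List.take_append_of_le_length (by rw [Sword_length]; exact hjk), ih hjk]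
      · have : j = k + 1 := by omega
        subst this
        rw [List.take_of_length_le (by rw [Sword_length])]

section DihedralValues

open DihedralGroup

variable {a b : V} (hne : a ≠ b) (hnadj : ¬ Γ.Adj a b)

theorem psi_Sword (e : ℕ) :
    psi Γ hne hnadj ((SimpleGraph.racCS Γ).wordProd (Sword a b (2 * e))) = r (-(e : ZMod 0)) ∧
    psi Γ hne hnadj ((SimpleGraph.racCS Γ).wordProd (Sword a b (2 * e + 1))) = sr ((e : ZMod 0) + 1) := by
  induction e with
  | zero =>
      constructor
      · show psi Γ hne hnadj ((SimpleGraph.racCS Γ).wordProd (Sword a b 0)) = _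
        rw [show Sword a b 0 = [] from rfl, CoxeterSystem.wordProd_nil, map_one]
        show _ = r (-(0 : ZMod 0))
        norm_num
      · show psi Γ hne hnadj ((SimpleGraph.racCS Γ).wordProd (Sword a b 1)) = _
        rw [show Sword a b 1 = [] ++ [b] from rfl, List.nil_append,
          CoxeterSystem.wordProd_singleton, psi_simple]
        show dihF a b b = sr ((0 : ZMod 0) + 1)
        rw [dihF, if_neg (Ne.symm hne), if_pos rfl]
        norm_num
  | succ e ih =>
      obtain ⟨ih0, ih1⟩ := ih
      have step2 : psi Γ hne hnadj ((SimpleGraph.racCS Γ).wordProd (Sword a b (2 * e + 2)))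
          = r (-((e : ZMod 0) + 1)) := by
        rw [show Sword a b (2 * e + 2) = Sword a b (2 * e + 1) ++ [a] by
          rw [Sword]; congr 1; simp [Nat.even_add_one, parity_simps]]
        rw [CoxeterSystem.wordProd_append, map_mul, ih1, CoxeterSystem.wordProd_singleton,
          psi_simple, dihF, if_pos rfl, sr_mul_sr]
        congr 1
      constructor
      · rw [show 2 * (e + 1) = 2 * e + 2 by ring, step2]
        congr 1
      · rw [show 2 * (e + 1) + 1 = (2 * e + 2) + 1 by ring]
        rw [show Sword a b ((2 * e + 2) + 1) = Sword a b (2 * e + 2) ++ [b] by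
          rw [Sword]; congr 1; simp [parity_simps]]
        rw [CoxeterSystem.wordProd_append, map_mul, step2, CoxeterSystem.wordProd_singleton,
          psi_simple, dihF, if_neg (Ne.symm hne), if_pos rfl, r_mul_sr]
        congr 1
        push_cast
        ring

theorem psi_Sword_succ_mul_inv (m : ℕ) :
    psi Γ hne hnadj ((SimpleGraph.racCS Γ).wordProd (Sword a b (m + 1))) *
      (psi Γ hne hnadj ((SimpleGraph.racCS Γ).wordProd (Sword a b m)))⁻¹ =
    sr ((m : ZMod 0) + 1) := by
  have hrinv : ∀ i : ZMod 0, (r i)⁻¹ = r (-i) := by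
    intro i
    apply inv_eq_of_mul_eq_one_right
    rw [r_mul_r, add_neg_cancel]
    rfl
  have hsrinv : ∀ i : ZMod 0, (sr i)⁻¹ = sr i := by
    intro i
    apply inv_eq_of_mul_eq_one_right
    rw [sr_mul_sr, sub_self]
    rfl
  rcases Nat.even_or_odd m with ⟨e, he⟩ | ⟨e, he⟩
  · subst he
    rw [show e + e = 2 * e by ring]
    rw [(psi_Sword Γ hne hnadj e).2, (psi_Sword Γ hne hnadj e).1, hrinv, neg_neg, sr_mul_r]
    congr 1
    push_cast
    ring
  · subst he
    rw [show 2 * e + 1 + 1 = 2 * (e + 1) by ring]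
    rw [(psi_Sword Γ hne hnadj (e + 1)).1, (psi_Sword Γ hne hnadj e).2, hsrinv, r_mul_sr]
    congr 1
    push_cast
    ring

end DihedralValues

theorem Sword_succ_eq (a b : V) (k : ℕ) :
    Sword a b (k + 1) = Sword a b k ++ [if Even k then b else a] := rfl

/-- No element has descents at two distinct non-adjacent letters. -/
theorem no_double_descent {a b : V} (hne : a ≠ b) (hnadj : ¬ Γ.Adj a b) (w : WG)
    (hda : (SimpleGraph.racCS Γ).length (w * ss a) < (SimpleGraph.racCS Γ).length w)
    (hdb : (SimpleGraph.racCS Γ).length (w * ss b) < (SimpleGraph.racCS Γ).length w) :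
    False := by
  have main : ∀ k : ℕ, ∃ ω : List V,
      (SimpleGraph.racCS Γ).IsReduced (ω ++ Sword a b k) ∧
      w = (SimpleGraph.racCS Γ).wordProd (ω ++ Sword a b k) := by
    intro k
    induction k with
    | zero =>
        obtain ⟨ω, h1, h2⟩ := (SimpleGraph.racCS Γ).exists_reduced_word' w
        exact ⟨ω, by simpa [Sword] using h1, by simpa [Sword] using h2⟩
    | succ k ih =>
        obtain ⟨ω, hred, hw⟩ := ih
        set c : V := if Even k then b else a with hc
        have hdc : (SimpleGraph.racCS Γ).length (w * ss c) < (SimpleGraph.racCS Γ).length w := by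
          rw [hc]; split_ifs; exacts [hdb, hda]
        obtain ⟨j, hj, hex⟩ := exchange Γ hdc _ hw
        have hlenw : (SimpleGraph.racCS Γ).length w = ω.length + k := by
          have := hred
          rw [CoxeterSystem.IsReduced, ← hw] at this
          rw [this, List.length_append, Sword_length]
        rcases Nat.lt_or_ge j ω.length with hjlt | hjge
        · -- erase inside ω
          refine ⟨ω.eraseIdx j, ?_, ?_⟩
          · rw [CoxeterSystem.IsReduced]
            have hπ : (SimpleGraph.racCS Γ).wordProd (ω.eraseIdx j ++ Sword a b (k + 1)) = w := by
              rw [Sword_succ_eq, ← hc, ← List.append_assoc, CoxeterSystem.wordProd_append,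
                ← List.eraseIdx_append_of_lt_length hjlt, CoxeterSystem.wordProd_singleton,
                ← hex]
              rw [mul_assoc, (SimpleGraph.racCS Γ).simple_mul_simple_self, mul_one]
            rw [hπ, List.length_append, Sword_length]
            have hje : (ω.eraseIdx j).length + 1 = ω.length :=
              List.length_eraseIdx_add_one hjlt
            omega
          · rw [Sword_succ_eq, ← hc, ← List.append_assoc, CoxeterSystem.wordProd_append,
              ← List.eraseIdx_append_of_lt_length hjlt, CoxeterSystem.wordProd_singleton, ← hex]
            rw [mul_assoc, (SimpleGraph.racCS Γ).simple_mul_simple_self, mul_one]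
        · -- erase inside the alternating suffix: contradiction via the dihedral quotient
          exfalso
          set j' : ℕ := j - ω.length with hj'
          have hj'k : j' < k := by
            rw [List.length_append, Sword_length] at hj
            omega
          have herase : (ω ++ Sword a b k).eraseIdx j = ω ++ (Sword a b k).eraseIdx j' := by
            rw [List.eraseIdx_append_of_length_le hjge]
          -- π (Sword k) * s c = π ((Sword k).eraseIdx j')
          have hkey : (SimpleGraph.racCS Γ).wordProd (Sword a b k) * ss c
              = (SimpleGraph.racCS Γ).wordProd ((Sword a b k).eraseIdx j') := by
            apply mul_left_cancel (a := (SimpleGraph.racCS Γ).wordProd ω)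
            rw [← mul_assoc, ← CoxeterSystem.wordProd_append, ← hw, hex, herase,
              CoxeterSystem.wordProd_append]
          -- decompose Sword k
          have hsplit : Sword a b k = Sword a b (j' + 1) ++ (Sword a b k).drop (j' + 1) := by
            conv_lhs => rw [← List.take_append_drop (j' + 1) (Sword a b k)]
            rw [Sword_take a b (by omega)]
          have hsplit' : (Sword a b k).eraseIdx j'
              = Sword a b j' ++ (Sword a b k).drop (j' + 1) := by
            rw [List.eraseIdx_eq_take_drop_succ, Sword_take a b (by omega)]
          set D := (SimpleGraph.racCS Γ).wordProd ((Sword a b k).drop (j' + 1)) with hD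
          have h1 : (SimpleGraph.racCS Γ).wordProd (Sword a b (k + 1))
              = (SimpleGraph.racCS Γ).wordProd (Sword a b j') * D := by
            rw [Sword_succ_eq, ← hc, CoxeterSystem.wordProd_append,
              CoxeterSystem.wordProd_singleton, hkey, hsplit', CoxeterSystem.wordProd_append]
          have h2 : (SimpleGraph.racCS Γ).wordProd (Sword a b k)
              = (SimpleGraph.racCS Γ).wordProd (Sword a b (j' + 1)) * D := by
            conv_lhs => rw [hsplit]
            rw [CoxeterSystem.wordProd_append]
          have h3 : (SimpleGraph.racCS Γ).wordProd (Sword a b (k + 1)) *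
              ((SimpleGraph.racCS Γ).wordProd (Sword a b k))⁻¹
              = (SimpleGraph.racCS Γ).wordProd (Sword a b j') *
                ((SimpleGraph.racCS Γ).wordProd (Sword a b (j' + 1)))⁻¹ := by
            rw [h1, h2]
            group
          have h4 := congrArg (psi Γ hne hnadj) h3
          rw [map_mul, map_mul, map_inv, map_inv, psi_Sword_succ_mul_inv Γ hne hnadj k] at h4
          have h5 : psi Γ hne hnadj ((SimpleGraph.racCS Γ).wordProd (Sword a b j')) *
              (psi Γ hne hnadj ((SimpleGraph.racCS Γ).wordProd (Sword a b (j' + 1))))⁻¹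
              = (DihedralGroup.sr ((j' : ZMod 0) + 1))⁻¹ := by
            rw [← psi_Sword_succ_mul_inv Γ hne hnadj j']
            group
          rw [h5] at h4
          have hsr : ∀ i : ZMod 0, (DihedralGroup.sr i : DihedralGroup 0)⁻¹
              = DihedralGroup.sr i := by
            intro i
            apply inv_eq_of_mul_eq_one_right
            rw [DihedralGroup.sr_mul_sr, sub_self]
            rfl
          rw [hsr] at h4
          have hinj : ((k : ZMod 0) + 1) = ((j' : ZMod 0) + 1) := by
            injection h4
          have hkj : (k : ZMod 0) = (j' : ZMod 0) := by
            exact add_right_cancel hinj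
          have : k = j' := Nat.cast_inj.mp hkj
          omega
  obtain ⟨ω, hred, hw⟩ := main ((SimpleGraph.racCS Γ).length w + 1)
  have h := hred
  rw [CoxeterSystem.IsReduced, ← hw] at h
  have hlen : (ω ++ Sword a b ((SimpleGraph.racCS Γ).length w + 1)).length
      = ω.length + ((SimpleGraph.racCS Γ).length w + 1) := by
    rw [List.length_append, Sword_length]
  omega

theorem walk_step (l : List V) : ∀ (x : WG) (d : V),
    List.Chain' Γᶜ.Adj (d :: l) →
    (SimpleGraph.racCS Γ).length (x * ss d) < (SimpleGraph.racCS Γ).length x →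
    (SimpleGraph.racCS Γ).length (x * (SimpleGraph.racCS Γ).wordProd l)
        = (SimpleGraph.racCS Γ).length x + l.length ∧
      (SimpleGraph.racCS Γ).length (x * (SimpleGraph.racCS Γ).wordProd l *
          ss ((d :: l).getLast (List.cons_ne_nil d l)))
        < (SimpleGraph.racCS Γ).length (x * (SimpleGraph.racCS Γ).wordProd l) := by
  induction l with
  | nil =>
      intro x d _ hd
      refine ⟨by simp, ?_⟩
      simpa using hd
  | cons e l' ih =>
      intro x d hchain hd
      obtain ⟨hadj, hchain'⟩ := List.isChain_cons_cons.mp hchain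
      obtain ⟨hne, hnadj⟩ := (Γ.compl_adj d e).mp hadj
      have hnotdesc : ¬ ((SimpleGraph.racCS Γ).length (x * ss e)
          < (SimpleGraph.racCS Γ).length x) := fun h =>
        no_double_descent Γ hne hnadj x hd h
      have hup : (SimpleGraph.racCS Γ).length (x * ss e)
          = (SimpleGraph.racCS Γ).length x + 1 := by
        rcases (SimpleGraph.racCS Γ).length_mul_simple x e with h | h
        · exact h
        · omega
      have hdesc' : (SimpleGraph.racCS Γ).length ((x * ss e) * ss e)
          < (SimpleGraph.racCS Γ).length (x * ss e) := by
        rw [(SimpleGraph.racCS Γ).simple_mul_simple_cancel_right]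
        omega
      obtain ⟨H1, H2⟩ := ih (x * ss e) e hchain' hdesc'
      have hrw : x * (SimpleGraph.racCS Γ).wordProd (e :: l')
          = (x * ss e) * (SimpleGraph.racCS Γ).wordProd l' := by
        rw [CoxeterSystem.wordProd_cons, ← mul_assoc]
      constructor
      · rw [hrw, H1, hup, List.length_cons]
        omega
      · rw [List.getLast_cons (List.cons_ne_nil e l'), hrw]
        exact H2

end Statement5Aux

/-- If `(t₁, …, tₙ)` is a closed walk in `Γᶜ`, `g := t₁ ⋯ tₙ ∈ W_Γ`, and
`x ∈ W_Γ` ends in `tₙ`, i.e. `ℓ(x tₙ) = ℓ(x) - 1`, then `ℓ(x gᴸ) = ℓ(x) + n L` for all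
`L ∈ ℕ`. -/
theorem statement5 {V : Type*} [Fintype V] (Γ : SimpleGraph V) (t : List V)
    (ht : Γᶜ.IsClosedWalkList t) (x : Γ.racGroup)
    (hx : Γ.racCS.length x =
      Γ.racCS.length (x * Γ.racCS.simple (t.getLast ht.1)) + 1) :
    ∀ L : ℕ,
      Γ.racCS.length (x * (Γ.racCS.wordProd t) ^ L) =
        Γ.racCS.length x + t.length * L := by
  have key : ∀ L : ℕ,
      Γ.racCS.length (x * (Γ.racCS.wordProd t) ^ L) = Γ.racCS.length x + t.length * L ∧
      Γ.racCS.length (x * (Γ.racCS.wordProd t) ^ L * Γ.racCS.simple (t.getLast ht.1))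
        < Γ.racCS.length (x * (Γ.racCS.wordProd t) ^ L) := by
    intro L
    induction L with
    | zero =>
        constructor
        · simp
        · simp only [pow_zero, mul_one]
          omega
    | succ L ihL =>
        obtain ⟨h1, h2⟩ := ihL
        have hchain : List.Chain' Γᶜ.Adj (t.getLast ht.1 :: t) := by
          rw [show List.Chain' Γᶜ.Adj (t.getLast ht.1 :: t) = List.IsChain Γᶜ.Adj (t.getLast ht.1 :: t) from rfl, List.isChain_cons]
          constructor
          · intro y hy
            have hy' : y = t.head ht.1 := by
              rwa [List.head?_eq_head ht.1, Option.mem_some_iff, eq_comm] at hy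
            rw [hy']
            exact (ht.2.2 ht.1).symm
          · exact ht.2.1
        obtain ⟨H1, H2⟩ :=
          Statement5Aux.walk_step Γ t (x * (Γ.racCS.wordProd t) ^ L) (t.getLast ht.1) hchain h2
        have hrw : x * (Γ.racCS.wordProd t) ^ (L + 1)
            = x * (Γ.racCS.wordProd t) ^ L * Γ.racCS.wordProd t := by
          rw [pow_succ, ← mul_assoc]
        constructor
        · rw [hrw, H1, h1, Nat.mul_succ]
          omega
        · rw [hrw]
          have hgl : (t.getLast ht.1 :: t).getLast (List.cons_ne_nil _ t) = t.getLast ht.1 :=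
            List.getLast_cons ht.1
          rwa [hgl] at H2
  exact fun L => (key L).1
end
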